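/- arXiv:2211.09326 — 3 statements merged into one kernel-verified Lean document; each statement's English description precedes it below -/
import Mathlib

section
/- Let Z ∈ ℝ^{p×q} be such that ZᵀZ is invertible, and let A, B ∈ ℝ^{q×q} be fixed matrices with B symmetric. Then the divergence of the matrix field Z ↦ Z(ZᵀZ)^{-1}A(ZᵀZ)^{-1}B satisfies Σ_{i=1}^p Σ_{j=1}^q ∂/∂Z_{ij} (Z(ZᵀZ)^{-1}A(ZᵀZ)^{-1}B)_{ij} = (p−q−2)·tr((ZᵀZ)^{-1}A(ZᵀZ)^{-1}B) − tr(A(ZᵀZ)^{-1})·tr((ZᵀZ)^{-1}B). -/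
open Matrix

section Aux

attribute [local instance] Matrix.linftyOpNormedRing Matrix.linftyOpNormedAlgebra

variable {p q : ℕ}

/-- entry of `P * single a b 1 * Q`. -/
lemma aux_mul_std_mul {m n k l : Type*} [Fintype n] [Fintype k] [DecidableEq n] [DecidableEq k]
    (P : Matrix m n ℝ) (Q : Matrix k l ℝ) (a : n) (b : k) (x : m) (y : l) :
    (P * single a b (1 : ℝ) * Q) x y = P x a * Q b y := by
  simp [Matrix.mul_apply, Matrix.single, ite_and, Finset.sum_mul, of_apply]

lemma aux_P_std_Q {m n k l : Type*} [Fintype n] [Fintype k] [DecidableEq n] [DecidableEq k]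
    (P : Matrix m n ℝ) (Q : Matrix k l ℝ) (a : n) (b : k) (x : m) (y : l) :
    (P * (single a b (1 : ℝ) * Q)) x y = P x a * Q b y := by
  rw [← Matrix.mul_assoc]; exact aux_mul_std_mul P Q a b x y

lemma aux_std_mul {n k l : Type*} [Fintype k] [DecidableEq n] [DecidableEq k]
    (Q : Matrix k l ℝ) (a : n) (b : k) (y : l) :
    (single a b (1 : ℝ) * Q) a y = Q b y := by
  simp [Matrix.mul_apply, Matrix.single, ite_and, of_apply]

lemma aux_sum_trace (P Q : Matrix (Fin p) (Fin q) ℝ) :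
    ∑ i : Fin p, ∑ j : Fin q, P i j * Q i j = Matrix.trace (Pᵀ * Q) := by
  rw [Finset.sum_comm]
  simp [Matrix.trace, Matrix.mul_apply, Matrix.diag]

/-- The key pointwise derivative computation. -/
lemma aux_deriv (Z : Matrix (Fin p) (Fin q) ℝ) (hZ : IsUnit (Zᵀ * Z).det)
    (A B : Matrix (Fin q) (Fin q) ℝ) (i : Fin p) (j : Fin q) :
    HasDerivAt (fun t : ℝ =>
          ((Z + t • Matrix.single i j (1 : ℝ))
              * (((Z + t • Matrix.single i j (1 : ℝ))ᵀ
                  * (Z + t • Matrix.single i j (1 : ℝ)))⁻¹)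
              * A
              * (((Z + t • Matrix.single i j (1 : ℝ))ᵀ
                  * (Z + t • Matrix.single i j (1 : ℝ)))⁻¹)
              * B) i j)
      ((single i j (1:ℝ)
          * ((Zᵀ*Z)⁻¹ * A * (Zᵀ*Z)⁻¹ * B)
        + Z * (-((Zᵀ*Z)⁻¹ * ((single i j (1:ℝ))ᵀ*Z + Zᵀ*single i j (1:ℝ)) * (Zᵀ*Z)⁻¹)
                 * A * (Zᵀ*Z)⁻¹ * B
             + (Zᵀ*Z)⁻¹ * A
                 * (-((Zᵀ*Z)⁻¹ * ((single i j (1:ℝ))ᵀ*Z + Zᵀ*single i j (1:ℝ)) * (Zᵀ*Z)⁻¹))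
                 * B)) i j) 0 := by
  set E : Matrix (Fin p) (Fin q) ℝ := single i j (1:ℝ) with hE
  set S' : Matrix (Fin q) (Fin q) ℝ := Eᵀ*Z + Zᵀ*E with hS'
  set W : Matrix (Fin q) (Fin q) ℝ := (Zᵀ*Z)⁻¹ with hW
  -- the path of Gram matrices
  have hpath : ∀ t : ℝ, (Z + t • E)ᵀ * (Z + t • E) = Zᵀ*Z + t • S' + (t*t) • (Eᵀ*E) := by
    intro t
    rw [transpose_add, transpose_smul, Matrix.add_mul, Matrix.mul_add, Matrix.mul_add,
      Matrix.smul_mul, Matrix.smul_mul, Matrix.mul_smul, Matrix.mul_smul, smul_smul, hS',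
      smul_add]
    abel
  have hSder : HasDerivAt (fun t : ℝ => Zᵀ*Z + t • S' + (t*t) • (Eᵀ*E)) S' 0 := by
    have h1 : HasDerivAt (fun t : ℝ => t • S') ((1:ℝ) • S') 0 :=
      (hasDerivAt_id (0:ℝ)).smul_const S'
    have h2 : HasDerivAt (fun t : ℝ => (t*t) • (Eᵀ*E)) ((0*0 + 0*0 : ℝ) • (Eᵀ*E)) 0 := by
      have h := ((hasDerivAt_id (0:ℝ)).mul (hasDerivAt_id (0:ℝ))).smul_const (Eᵀ*E)
      simp at h ⊢
      exact h
    have h := ((hasDerivAt_const 0 (Zᵀ*Z)).add h1).add h2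
    simp at h
    exact h
  -- derivative of inverse
  have hU : IsUnit (Zᵀ*Z) := (Matrix.isUnit_iff_isUnit_det _).mpr hZ
  obtain ⟨u, hu⟩ := hU
  have hinv : HasFDerivAt Ring.inverse
      (-(ContinuousLinearMap.mulLeftRight ℝ _ ((Zᵀ*Z)⁻¹) ((Zᵀ*Z)⁻¹))) (Zᵀ*Z) := by
    have := hasFDerivAt_ringInverse (𝕜 := ℝ) u
    rwa [Matrix.coe_units_inv, hu] at this
  have hMder : HasDerivAt (fun t : ℝ => Ring.inverse ((Z + t • E)ᵀ * (Z + t • E)))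
      (-(W * S' * W)) 0 := by
    have e0 : Zᵀ*Z = Zᵀ*Z + (0:ℝ) • S' + ((0:ℝ)*(0:ℝ)) • (Eᵀ*E) := by simp
    rw [e0] at hinv
    have h := hinv.comp_hasDerivAt 0 hSder
    have : HasDerivAt (fun t : ℝ => Ring.inverse (Zᵀ*Z + t • S' + (t*t) • (Eᵀ*E)))
        (-(W * S' * W)) 0 := by
      simp at h
      exact h
    simpa only [hpath] using this
  -- assemble N t = inverse * A * inverse * B
  have hNder : HasDerivAt (fun t : ℝ =>
      Ring.inverse ((Z + t • E)ᵀ * (Z + t • E)) * A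
        * Ring.inverse ((Z + t • E)ᵀ * (Z + t • E)) * B)
      ((-(W * S' * W)) * A * W * B + W * A * (-(W * S' * W)) * B) 0 := by
    have h0 : Ring.inverse (Zᵀ*Z) = W := by rw [hW, Matrix.nonsing_inv_eq_ringInverse]
    have h1 := (hMder.mul_const A).mul hMder
    have h2 := h1.mul_const B
    have : (Z + (0:ℝ) • E)ᵀ * (Z + (0:ℝ) • E) = Zᵀ*Z := by simp
    rw [this, h0] at h2
    refine h2.congr_deriv ?_
    noncomm_ring
  -- entry extraction, then finite sum over k
  have hentry : ∀ k : Fin q, HasDerivAt (fun t : ℝ =>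
      (Ring.inverse ((Z + t • E)ᵀ * (Z + t • E)) * A
        * Ring.inverse ((Z + t • E)ᵀ * (Z + t • E)) * B) k j)
      (((-(W * S' * W)) * A * W * B + W * A * (-(W * S' * W)) * B) k j) 0 := by
    intro k
    let L : Matrix (Fin q) (Fin q) ℝ →ₗ[ℝ] ℝ :=
      { toFun := fun M => M k j, map_add' := fun _ _ => rfl, map_smul' := fun _ _ => rfl }
    exact (L.toContinuousLinearMap.hasFDerivAt.comp_hasDerivAt 0 hNder)
  have hG : ∀ k : Fin q, HasDerivAt (fun t : ℝ => (Z + t • E) i k) (E i k) 0 := by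
    intro k
    simpa [mul_comm] using ((hasDerivAt_id (0:ℝ)).const_mul (E i k)).const_add (Z i k)
  -- f t = ∑ k, G t i k * N t k j
  have hfder : HasDerivAt (fun t : ℝ =>
      ∑ k : Fin q, (Z + t • E) i k *
        (Ring.inverse ((Z + t • E)ᵀ * (Z + t • E)) * A
          * Ring.inverse ((Z + t • E)ᵀ * (Z + t • E)) * B) k j)
      (∑ k : Fin q, (E i k * ((Zᵀ*Z)⁻¹ * A * (Zᵀ*Z)⁻¹ * B) k j
        + Z i k * (((-(W * S' * W)) * A * W * B + W * A * (-(W * S' * W)) * B) k j)) ) 0 := by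
    apply HasDerivAt.fun_sum
    intro k _
    have := (hG k).mul (hentry k)
    have h0 : Ring.inverse (Zᵀ*Z) = W := by rw [hW, Matrix.nonsing_inv_eq_ringInverse]
    simp [h0, hW, mul_comm] at this ⊢
    exact this
  have hfinal := hfder
  convert hfinal using 2 with t
  · simp only [Matrix.nonsing_inv_eq_ringInverse, ← Matrix.mul_apply, Matrix.mul_assoc]
  · simp [Matrix.add_apply, Matrix.mul_apply, Finset.sum_add_distrib, hW]

end Aux

/-- Divergence formula for the matrix field `Z ↦ Z(ZᵀZ)⁻¹A(ZᵀZ)⁻¹B` with `B` symmetric: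
the sum over all entries `(i,j)` of the partial derivative of the `(i,j)` entry with
respect to `Zᵢⱼ` equals `(p-q-2) tr((ZᵀZ)⁻¹A(ZᵀZ)⁻¹B) - tr(A(ZᵀZ)⁻¹) tr((ZᵀZ)⁻¹B)`. -/
theorem stmt_10 (p q : ℕ) (Z : Matrix (Fin p) (Fin q) ℝ) (hZ : IsUnit (Zᵀ * Z).det)
    (A B : Matrix (Fin q) (Fin q) ℝ) (hB : Bᵀ = B) :
    ∑ i : Fin p, ∑ j : Fin q,
        deriv (fun t : ℝ =>
          ((Z + t • Matrix.single i j (1 : ℝ))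
              * (((Z + t • Matrix.single i j (1 : ℝ))ᵀ
                  * (Z + t • Matrix.single i j (1 : ℝ)))⁻¹)
              * A
              * (((Z + t • Matrix.single i j (1 : ℝ))ᵀ
                  * (Z + t • Matrix.single i j (1 : ℝ)))⁻¹)
              * B) i j) 0
      = ((p : ℝ) - q - 2) * Matrix.trace ((Zᵀ * Z)⁻¹ * A * (Zᵀ * Z)⁻¹ * B)
        - Matrix.trace (A * (Zᵀ * Z)⁻¹) * Matrix.trace ((Zᵀ * Z)⁻¹ * B) := by
  have hstdT : ∀ (i : Fin p) (j : Fin q),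
      (single i j (1:ℝ))ᵀ = single j i (1:ℝ) := by
    intro i j
    ext a b
    simp [Matrix.single, Matrix.transpose_apply, and_comm]
  set W : Matrix (Fin q) (Fin q) ℝ := (Zᵀ*Z)⁻¹ with hW
  have hWt : Wᵀ = W := by
    rw [hW, Matrix.transpose_nonsing_inv, Matrix.transpose_mul, Matrix.transpose_transpose]
  have hWS : W * (Zᵀ*Z) = 1 := Matrix.nonsing_inv_mul _ hZ
  have hSW : (Zᵀ*Z) * W = 1 := Matrix.mul_nonsing_inv _ hZ
  set N : Matrix (Fin q) (Fin q) ℝ := W*(A*(W*B)) with hN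
  have hderiv : ∀ (i : Fin p) (j : Fin q),
      deriv (fun t : ℝ =>
          ((Z + t • Matrix.single i j (1 : ℝ))
              * (((Z + t • Matrix.single i j (1 : ℝ))ᵀ
                  * (Z + t • Matrix.single i j (1 : ℝ)))⁻¹)
              * A
              * (((Z + t • Matrix.single i j (1 : ℝ))ᵀ
                  * (Z + t • Matrix.single i j (1 : ℝ)))⁻¹)
              * B) i j) 0
        = N j j - (Z*W) i j * (Z*N) i j - (Z*(W*Zᵀ)) i i * N j j
          - (Z*(W*(A*W))) i j * (Z*(W*B)) i j
          - (Z*(W*(A*(W*Zᵀ)))) i i * (W*B) j j := by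
    intro i j
    rw [(aux_deriv Z hZ A B i j).deriv]
    have keyM : single i j (1:ℝ)
          * ((Zᵀ*Z)⁻¹ * A * (Zᵀ*Z)⁻¹ * B)
        + Z * (-((Zᵀ*Z)⁻¹ * ((single i j (1:ℝ))ᵀ*Z + Zᵀ*single i j (1:ℝ)) * (Zᵀ*Z)⁻¹)
                 * A * (Zᵀ*Z)⁻¹ * B
             + (Zᵀ*Z)⁻¹ * A
                 * (-((Zᵀ*Z)⁻¹ * ((single i j (1:ℝ))ᵀ*Z + Zᵀ*single i j (1:ℝ)) * (Zᵀ*Z)⁻¹))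
                 * B)
        = single i j (1:ℝ) * N
          - (Z*W) * (single j i (1:ℝ) * (Z*N))
          - (Z*(W*Zᵀ)) * (single i j (1:ℝ) * N)
          - (Z*(W*(A*W))) * (single j i (1:ℝ) * (Z*(W*B)))
          - (Z*(W*(A*(W*Zᵀ)))) * (single i j (1:ℝ) * (W*B)) := by
      rw [hstdT, hN, ← hW]
      simp only [Matrix.mul_add, Matrix.add_mul, Matrix.neg_mul, Matrix.mul_neg,
        Matrix.mul_assoc, sub_eq_add_neg]
      abel
    rw [keyM]
    simp only [Matrix.sub_apply, aux_std_mul, aux_P_std_Q]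
  simp only [hderiv]
  have e1 : ∑ i : Fin p, ∑ j : Fin q, N j j = (p : ℝ) * Matrix.trace N := by
    rw [Finset.sum_const, Finset.card_univ, Fintype.card_fin, nsmul_eq_mul]
    simp [Matrix.trace, Matrix.diag]
  have e2 : ∑ i : Fin p, ∑ j : Fin q, (Z*W) i j * (Z*N) i j
      = Matrix.trace ((Z*W)ᵀ * (Z*N)) := aux_sum_trace _ _
  have e3 : ∑ i : Fin p, ∑ j : Fin q, (Z*(W*Zᵀ)) i i * N j j
      = Matrix.trace (Z*(W*Zᵀ)) * Matrix.trace N := by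
    simp only [← Finset.mul_sum]
    rw [← Finset.sum_mul]
    simp [Matrix.trace, Matrix.diag]
  have e4 : ∑ i : Fin p, ∑ j : Fin q, (Z*(W*(A*W))) i j * (Z*(W*B)) i j
      = Matrix.trace ((Z*(W*(A*W)))ᵀ * (Z*(W*B))) := aux_sum_trace _ _
  have e5 : ∑ i : Fin p, ∑ j : Fin q, (Z*(W*(A*(W*Zᵀ)))) i i * (W*B) j j
      = Matrix.trace (Z*(W*(A*(W*Zᵀ)))) * Matrix.trace (W*B) := by
    simp only [← Finset.mul_sum]
    rw [← Finset.sum_mul]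
    simp [Matrix.trace, Matrix.diag]
  simp only [Finset.sum_sub_distrib]
  rw [e1, e2, e3, e4, e5]
  -- now evaluate the traces
  have t2 : Matrix.trace ((Z*W)ᵀ * (Z*N)) = Matrix.trace N := by
    rw [Matrix.transpose_mul, hWt, Matrix.mul_assoc, ← Matrix.mul_assoc Zᵀ Z N,
      hN, ← Matrix.mul_assoc (Zᵀ*Z) W, hSW, Matrix.one_mul]
  have t3 : Matrix.trace (Z*(W*Zᵀ)) = (q : ℝ) := by
    rw [Matrix.trace_mul_comm, Matrix.mul_assoc, hWS, Matrix.trace_one]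
    simp
  have t4 : Matrix.trace ((Z*(W*(A*W)))ᵀ * (Z*(W*B))) = Matrix.trace N := by
    have : (Z*(W*(A*W)))ᵀ * (Z*(W*B)) = W*(Aᵀ*(W*B)) := by
      simp only [Matrix.transpose_mul, hWt, Matrix.mul_assoc]
      rw [← Matrix.mul_assoc Zᵀ Z, ← Matrix.mul_assoc (Zᵀ*Z) W, hSW, Matrix.one_mul]
    rw [this, ← Matrix.trace_transpose]
    simp only [Matrix.transpose_mul, hWt, hB, Matrix.transpose_transpose]
    rw [Matrix.trace_mul_comm, hN]
    simp only [Matrix.mul_assoc]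
    rw [← Matrix.mul_assoc W B, Matrix.trace_mul_comm, Matrix.mul_assoc]
  have t5 : Matrix.trace (Z*(W*(A*(W*Zᵀ)))) = Matrix.trace (A * (Zᵀ*Z)⁻¹) := by
    rw [Matrix.trace_mul_comm]
    simp only [Matrix.mul_assoc]
    rw [hWS, Matrix.mul_one, Matrix.trace_mul_comm, hW]
  have tN : Matrix.trace ((Zᵀ*Z)⁻¹ * A * (Zᵀ*Z)⁻¹ * B) = Matrix.trace N := by
    rw [hN, ← hW]
    simp only [Matrix.mul_assoc]
  have tWB : Matrix.trace ((Zᵀ*Z)⁻¹ * B) = Matrix.trace (W*B) := by rw [hW]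
  rw [t2, t3, t4, t5, tN, tWB]
  ring
end

section
/- Let Z ∈ ℝ^{p×q} be such that ZᵀZ is invertible. Then the Laplacian of the function Z ↦ tr((ZᵀZ)^{-1}) satisfies Σ_{i=1}^p Σ_{j=1}^q ∂²/∂Z_{ij}² tr((ZᵀZ)^{-1}) = −2(p−q−2)·tr((ZᵀZ)^{-2}) + 2·(tr((ZᵀZ)^{-1}))². -/
open Matrix

lemma std_sandwich {m n p q : Type*} [Fintype p] [Fintype q] [DecidableEq p] [DecidableEq q]
    (X : Matrix m p ℝ) (Y : Matrix q n ℝ) (i : p) (j : q) (a : m) (b : n) :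
    (X * single i j (1:ℝ) * Y) a b = X a i * Y j b := by
  simp [Matrix.mul_apply, single, ite_and, Finset.sum_ite_eq, Finset.mul_sum,
    Finset.sum_ite_eq']

lemma transpose_std {p q : Type*} [DecidableEq p] [DecidableEq q] (i : p) (j : q) :
    (single i j (1:ℝ))ᵀ = single j i (1:ℝ) := by
  ext a b
  simp [single, transpose_apply, and_comm]

lemma trace_std_sandwich {k p q : Type*} [Fintype k] [Fintype p] [Fintype q]
    [DecidableEq p] [DecidableEq q]
    (X : Matrix k p ℝ) (Y : Matrix q k ℝ) (i : p) (j : q) :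
    trace (X * single i j (1:ℝ) * Y) = (Y * X) j i := by
  unfold Matrix.trace
  rw [Matrix.mul_apply]
  apply Finset.sum_congr rfl
  intro a _
  rw [Matrix.diag_apply, std_sandwich, mul_comm]

lemma sum_entries_eq_trace {m n : Type*} [Fintype m] [Fintype n]
    (X Y : Matrix n m ℝ) :
    ∑ i : m, ∑ j : n, X j i * Y j i = trace (X * Yᵀ) := by
  rw [Finset.sum_comm]
  simp [Matrix.trace, Matrix.diag, Matrix.mul_apply]

lemma sumA {k m n : Type*} [Fintype k] [Fintype m] [Fintype n] [DecidableEq m] [DecidableEq n]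
    (P : Matrix k m ℝ) (Q : Matrix n m ℝ) (R : Matrix n k ℝ) :
    ∑ i : m, ∑ j : n, trace (P * single i j (1:ℝ) * Q * single i j (1:ℝ) * R)
      = trace (Q * (R * P)ᵀ) := by
  rw [← sum_entries_eq_trace]
  apply Finset.sum_congr rfl; intro i _
  apply Finset.sum_congr rfl; intro j _
  have h1 : P * single i j (1:ℝ) * Q * single i j (1:ℝ) * R
      = P * single i j (1:ℝ) * (Q * single i j (1:ℝ) * R) := by
    simp only [Matrix.mul_assoc]
  rw [h1, trace_std_sandwich]
  have h2 : Q * single i j (1:ℝ) * R * P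
      = Q * single i j (1:ℝ) * (R * P) := by rw [Matrix.mul_assoc]
  rw [h2, std_sandwich]

lemma sumB {k m n : Type*} [Fintype k] [Fintype m] [Fintype n] [DecidableEq m] [DecidableEq n]
    (P : Matrix k m ℝ) (Q : Matrix n n ℝ) (R : Matrix m k ℝ) :
    ∑ i : m, ∑ j : n, trace (P * single i j (1:ℝ) * Q * (single i j (1:ℝ))ᵀ * R)
      = trace Q * trace (R * P) := by
  have key : ∀ (i : m) (j : n),
      trace (P * single i j (1:ℝ) * Q * (single i j (1:ℝ))ᵀ * R)
        = Q j j * (R * P) i i := by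
    intro i j
    rw [transpose_std]
    have h1 : P * single i j (1:ℝ) * Q * single j i (1:ℝ) * R
        = P * single i j (1:ℝ) * (Q * single j i (1:ℝ) * R) := by
      simp only [Matrix.mul_assoc]
    rw [h1, trace_std_sandwich]
    have h2 : Q * single j i (1:ℝ) * R * P
        = Q * single j i (1:ℝ) * (R * P) := by rw [Matrix.mul_assoc]
    rw [h2, std_sandwich]
  simp only [key]
  rw [Finset.sum_comm, ← Finset.sum_mul_sum]
  simp [Matrix.trace, Matrix.diag]

lemma sumC {k n : Type*} [Fintype k] [Fintype n] [DecidableEq n]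
    (P : Matrix k n ℝ) (R : Matrix n k ℝ) :
    ∑ j : n, trace (P * single j j (1:ℝ) * R) = trace (R * P) := by
  simp only [trace_std_sandwich]
  simp [Matrix.trace, Matrix.diag]

attribute [local instance] Matrix.linftyOpNormedAddCommGroup Matrix.linftyOpNormedRing
  Matrix.linftyOpNormedAlgebra

lemma second_deriv_trace_inv {q : ℕ} (A B C : Matrix (Fin q) (Fin q) ℝ) (hA : IsUnit A.det) :
    iteratedDeriv 2 (fun t : ℝ => trace ((A + t • B + t^2 • C)⁻¹)) 0
      = 2 * trace (A⁻¹*B*A⁻¹*B*A⁻¹) - 2 * trace (A⁻¹*C*A⁻¹) := by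
  haveI : CompleteSpace (Matrix (Fin q) (Fin q) ℝ) := FiniteDimensional.complete ℝ _
  set M : ℝ → Matrix (Fin q) (Fin q) ℝ := fun t => A + t • B + t^2 • C with hM
  have hMd : ∀ t : ℝ, HasDerivAt M (B + (2*t) • C) t := by
    intro t
    have h1 : HasDerivAt (fun t : ℝ => t • B) ((1:ℝ) • B) t :=
      (hasDerivAt_id t).smul_const B
    have h2 : HasDerivAt (fun t : ℝ => t^2 • C) ((2 * t^1 : ℝ) • C) t :=
      (hasDerivAt_pow 2 t).smul_const C
    have := ((hasDerivAt_const t A).add h1).add h2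
    simp at this
    exact this
  have hMc : Continuous M := by fun_prop
  have hM0 : M 0 = A := by simp [hM]
  have ev : ∀ᶠ t in nhds (0:ℝ), IsUnit (M t) := by
    have h0 : (M 0).det ≠ 0 := by rw [hM0]; exact hA.ne_zero
    have := (hMc.matrix_det).continuousAt (x := (0:ℝ)) |>.eventually_ne h0
    exact this.mono fun t ht => (Matrix.isUnit_iff_isUnit_det _).mpr (isUnit_iff_ne_zero.mpr ht)
  set N : ℝ → Matrix (Fin q) (Fin q) ℝ := fun t => Ring.inverse (M t) with hN
  -- trace composition
  have htr : ∀ (F : ℝ → Matrix (Fin q) (Fin q) ℝ) (F' : Matrix (Fin q) (Fin q) ℝ) (t : ℝ),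
      HasDerivAt F F' t → HasDerivAt (fun s => trace (F s)) (trace F') t := by
    intro F F' t hF
    have hL := (LinearMap.toContinuousLinearMap
      (Matrix.traceLinearMap (Fin q) ℝ ℝ)).hasFDerivAt (x := F t)
    have := hL.comp_hasDerivAt t hF
    simp at this
    exact this
  have hNd : ∀ t : ℝ, IsUnit (M t) → HasDerivAt N (-(N t * (B + (2*t) • C) * N t)) t := by
    intro t ht
    obtain ⟨u, hu⟩ := ht
    have hinv := hasFDerivAt_ringInverse (𝕜 := ℝ) u
    rw [hu] at hinv
    have := hinv.comp_hasDerivAt t (hMd t)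
    have hNt : N t = ↑u⁻¹ := by rw [hN]; simp [← hu, Ring.inverse_unit]
    rw [hNt]
    refine this.congr_deriv ?_
    simp
  have hfd : ∀ᶠ t in nhds (0:ℝ),
      deriv (fun t => trace (N t)) t = trace (-(N t * (B + (2*t) • C) * N t)) := by
    exact ev.mono fun t ht => (htr _ _ _ (hNd t ht)).deriv
  have hfeq : (fun t : ℝ => trace ((A + t • B + t^2 • C)⁻¹)) = fun t => trace (N t) := by
    funext t
    rw [hN]
    simp only [Matrix.nonsing_inv_eq_ringInverse, hM]
  rw [hfeq]
  rw [show (2:ℕ) = 1 + 1 from rfl, iteratedDeriv_succ, iteratedDeriv_one]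
  have hder : deriv (fun t => trace (N t)) =ᶠ[nhds (0:ℝ)]
      fun t => trace (-(N t * (B + (2*t) • C) * N t)) := hfd
  rw [hder.deriv_eq]
  -- now compute derivative of g at 0
  have hunit0 : IsUnit (M 0) := by
    rw [hM0]; exact (Matrix.isUnit_iff_isUnit_det _).mpr hA
  have hN0d : HasDerivAt N (-(N 0 * B * N 0)) 0 := by
    have := hNd 0 hunit0
    simpa using this
  have hN00 : N 0 = A⁻¹ := by
    show Ring.inverse (M 0) = A⁻¹
    rw [hM0, ← Matrix.nonsing_inv_eq_ringInverse]
  have hPd : HasDerivAt (fun t : ℝ => B + (2*t) • C) ((2:ℝ) • C) 0 := by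
    have h2 : HasDerivAt (fun t : ℝ => (2*t) • C) ((2:ℝ) • C) 0 := by
      have : HasDerivAt (fun t : ℝ => 2*t) (2:ℝ) 0 := by
        simpa using (hasDerivAt_id (0:ℝ)).const_mul 2
      have := this.smul_const C
      exact this
    have := (hasDerivAt_const (0:ℝ) B).add h2
    simp at this
    exact this
  have hprod : HasDerivAt (fun t => N t * (B + (2*t) • C) * N t)
      ((-(N 0 * B * N 0)) * (B + (2*(0:ℝ)) • C) * N 0 + N 0 * ((2:ℝ) • C) * N 0
        + N 0 * (B + (2*(0:ℝ)) • C) * (-(N 0 * B * N 0))) 0 := by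
    have := (hN0d.mul hPd).mul hN0d
    refine this.congr_deriv ?_
    simp only [Pi.mul_apply]
    noncomm_ring
  have hg : HasDerivAt (fun t => trace (-(N t * (B + (2*t) • C) * N t)))
      (trace (-((-(N 0 * B * N 0)) * (B + (2*(0:ℝ)) • C) * N 0 + N 0 * ((2:ℝ) • C) * N 0
        + N 0 * (B + (2*(0:ℝ)) • C) * (-(N 0 * B * N 0))))) 0 :=
    htr _ _ _ hprod.neg
  rw [hg.deriv]
  rw [hN00]
  simp only [mul_zero, zero_smul, add_zero]
  simp only [Matrix.neg_mul, Matrix.mul_neg, Matrix.trace_neg, Matrix.trace_add,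
    Matrix.mul_smul, Matrix.smul_mul, Matrix.trace_smul, smul_eq_mul, Matrix.mul_assoc,
    neg_add_rev, neg_neg, Matrix.trace_sub]
  ring

lemma std_mul_std {m p n : Type*} [Fintype p] [DecidableEq m] [DecidableEq p] [DecidableEq n]
    (j : m) (i : p) (k : n) :
    single j i (1:ℝ) * single i k (1:ℝ) = single j k (1:ℝ) := by
  ext a b
  simp only [Matrix.mul_apply, single, Matrix.of_apply, ite_and, boole_mul,
    Finset.sum_ite_eq, Finset.sum_ite_eq', Finset.mem_univ, if_true, mul_ite, mul_one, mul_zero]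
  by_cases h1 : j = a <;> by_cases h2 : k = b <;> simp [h1, h2]

/-- Laplacian formula: the sum over all entries `(i,j)` of the second pure partial
derivative of `Z ↦ tr((ZᵀZ)⁻¹)` equals `-2(p-q-2) tr((ZᵀZ)⁻²) + 2 (tr((ZᵀZ)⁻¹))²`. -/
theorem stmt_11 (p q : ℕ) (Z : Matrix (Fin p) (Fin q) ℝ) (hZ : IsUnit (Zᵀ * Z).det) :
    ∑ i : Fin p, ∑ j : Fin q,
        iteratedDeriv 2 (fun t : ℝ =>
          Matrix.trace (((Z + t • Matrix.single i j (1 : ℝ))ᵀ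
              * (Z + t • Matrix.single i j (1 : ℝ)))⁻¹)) 0
      = -2 * ((p : ℝ) - q - 2) * Matrix.trace (((Zᵀ * Z)⁻¹) ^ 2)
        + 2 * Matrix.trace ((Zᵀ * Z)⁻¹) ^ 2 := by
  set W : Matrix (Fin q) (Fin q) ℝ := (Zᵀ * Z)⁻¹ with hW
  have hWA : W * (Zᵀ * Z) = 1 := Matrix.nonsing_inv_mul _ hZ
  have hAW : (Zᵀ * Z) * W = 1 := Matrix.mul_nonsing_inv _ hZ
  have hWT : Wᵀ = W := by
    rw [hW, Matrix.transpose_nonsing_inv, Matrix.transpose_mul, Matrix.transpose_transpose]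
  -- Step 1: rewrite each summand via the calculus lemma
  have step1 : ∀ (i : Fin p) (j : Fin q),
      iteratedDeriv 2 (fun t : ℝ =>
          Matrix.trace (((Z + t • Matrix.single i j (1 : ℝ))ᵀ
              * (Z + t • Matrix.single i j (1 : ℝ)))⁻¹)) 0
        = 2 * trace (W * ((single i j (1:ℝ))ᵀ * Z + Zᵀ * single i j (1:ℝ)) * W
              * ((single i j (1:ℝ))ᵀ * Z + Zᵀ * single i j (1:ℝ)) * W)
          - 2 * trace (W * ((single i j (1:ℝ))ᵀ * single i j (1:ℝ)) * W) := by
    intro i j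
    set E := single i j (1:ℝ) with hE
    have hfun : (fun t : ℝ =>
        Matrix.trace (((Z + t • E)ᵀ * (Z + t • E))⁻¹))
        = fun t : ℝ => Matrix.trace ((Zᵀ * Z + t • (Eᵀ * Z + Zᵀ * E) + t^2 • (Eᵀ * E))⁻¹) := by
      funext t
      congr 1
      congr 1
      rw [Matrix.transpose_add, Matrix.transpose_smul]
      simp only [Matrix.add_mul, Matrix.mul_add, Matrix.smul_mul, Matrix.mul_smul,
        smul_add, smul_smul, pow_two]
      abel
    rw [hfun, second_deriv_trace_inv _ _ _ hZ]
  rw [Finset.sum_congr rfl fun i _ => Finset.sum_congr rfl fun j _ => step1 i j]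
  have hcol : ∀ (X : Matrix (Fin q) (Fin q) ℝ), W * (Zᵀ * (Z * X)) = X := by
    intro X
    have h : W * (Zᵀ * (Z * X)) = (W * (Zᵀ * Z)) * X := by simp only [Matrix.mul_assoc]
    rw [h, hWA, Matrix.one_mul]
  -- expand each summand into five sandwich traces
  have expand : ∀ (i : Fin p) (j : Fin q),
      2 * trace (W * ((single i j (1:ℝ))ᵀ * Z + Zᵀ * single i j (1:ℝ)) * W
            * ((single i j (1:ℝ))ᵀ * Z + Zᵀ * single i j (1:ℝ)) * W)
        - 2 * trace (W * ((single i j (1:ℝ))ᵀ * single i j (1:ℝ)) * W)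
      = 2 * trace (W * single j i (1:ℝ) * (Z*W) * single j i (1:ℝ) * (Z*W))
        + 2 * trace (W * single j i (1:ℝ) * (Z*W*Zᵀ) * (single j i (1:ℝ))ᵀ * W)
        + 2 * trace ((W*Zᵀ) * single i j (1:ℝ) * W * (single i j (1:ℝ))ᵀ * (Z*W))
        + 2 * trace ((W*Zᵀ) * single i j (1:ℝ) * (W*Zᵀ) * single i j (1:ℝ) * W)
        - 2 * trace (W * single j j (1:ℝ) * W) := by
    intro i j
    simp only [transpose_std, std_mul_std]
    simp only [Matrix.mul_add, Matrix.add_mul, Matrix.trace_add, Matrix.mul_assoc]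
    ring
  rw [Finset.sum_congr rfl fun i _ => Finset.sum_congr rfl fun j _ => expand i j]
  -- evaluate the five double sums
  have hS1 : ∑ i : Fin p, ∑ j : Fin q,
      trace (W * single j i (1:ℝ) * (Z*W) * single j i (1:ℝ) * (Z*W))
      = trace (W*W) := by
    rw [Finset.sum_comm, sumA]
    simp only [Matrix.transpose_mul, hWT, Matrix.mul_assoc]
    rw [Matrix.trace_mul_comm]
    simp only [Matrix.mul_assoc, hWA, Matrix.mul_one]
  have hS2 : ∑ i : Fin p, ∑ j : Fin q,
      trace (W * single j i (1:ℝ) * (Z*W*Zᵀ) * (single j i (1:ℝ))ᵀ * W)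
      = (q : ℝ) * trace (W*W) := by
    rw [Finset.sum_comm, sumB]
    rw [Matrix.trace_mul_comm, ← Matrix.mul_assoc, hAW, Matrix.trace_one]
    simp
  have hS3 : ∑ i : Fin p, ∑ j : Fin q,
      trace ((W*Zᵀ) * single i j (1:ℝ) * W * (single i j (1:ℝ))ᵀ * (Z*W))
      = trace W * trace W := by
    rw [sumB]
    congr 1
    rw [Matrix.trace_mul_comm]
    have h : (W*Zᵀ)*(Z*W) = W * (Zᵀ * (Z * W)) := by simp only [Matrix.mul_assoc]
    rw [h, hcol]
  have hS4 : ∑ i : Fin p, ∑ j : Fin q,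
      trace ((W*Zᵀ) * single i j (1:ℝ) * (W*Zᵀ) * single i j (1:ℝ) * W)
      = trace (W*W) := by
    rw [sumA]
    simp only [Matrix.transpose_mul, hWT, Matrix.transpose_transpose, Matrix.mul_assoc]
    rw [hcol]
  have hS5 : ∑ i : Fin p, ∑ j : Fin q, trace (W * single j j (1:ℝ) * W)
      = (p : ℝ) * trace (W*W) := by
    have h : ∀ i : Fin p, ∑ j : Fin q, trace (W * single j j (1:ℝ) * W)
        = trace (W*W) := fun _ => sumC W W
    rw [Finset.sum_congr rfl fun i _ => h i]
    simp [mul_comm]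
  simp only [Finset.sum_add_distrib, Finset.sum_sub_distrib, ← Finset.mul_sum]
  rw [hS1, hS2, hS3, hS4, hS5]
  rw [pow_two]
  ring
end

section
/- Let p ≥ 2q+3 and c = 2(p−2q−2)/q. Then for every Z ∈ ℝ^{p×q} with ZᵀZ invertible, the quantity −4c(p−q−2)·tr((ZᵀZ)^{-2}) + (c² + 4c)·(tr((ZᵀZ)^{-1}))² is at most −(4(p−2q−2)²/q)·tr((ZᵀZ)^{-2}), and in particular is strictly negative. -/
open Matrix

lemma trace_sq_symm {q : ℕ} (A : Matrix (Fin q) (Fin q) ℝ) (hA : Aᵀ = A) :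
    Matrix.trace (A ^ 2) = ∑ i, ∑ j, A i j ^ 2 := by
  rw [sq, Matrix.trace]
  refine Finset.sum_congr rfl fun i _ => ?_
  simp only [Matrix.diag, Matrix.mul_apply]
  refine Finset.sum_congr rfl fun j _ => ?_
  have h2 : A i j = A j i := congrFun (congrFun hA j) i
  rw [← h2, sq]

/-- For `p ≥ 2q+3` and `c = 2(p-2q-2)/q`, the quantity
`-4c(p-q-2) tr((ZᵀZ)⁻²) + (c²+4c)(tr((ZᵀZ)⁻¹))²` is at most
`-(4(p-2q-2)²/q) tr((ZᵀZ)⁻²)` and in particular is strictly negative. -/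
theorem stmt_12 (p q : ℕ) (hq : 1 ≤ q) (hpq : 2 * q + 3 ≤ p) (c : ℝ)
    (hc : c = 2 * ((p : ℝ) - 2 * q - 2) / q)
    (Z : Matrix (Fin p) (Fin q) ℝ) (hZ : IsUnit (Zᵀ * Z).det) :
    (-4 * c * ((p : ℝ) - q - 2) * Matrix.trace (((Zᵀ * Z)⁻¹) ^ 2)
        + (c ^ 2 + 4 * c) * Matrix.trace ((Zᵀ * Z)⁻¹) ^ 2
      ≤ -(4 * ((p : ℝ) - 2 * q - 2) ^ 2 / q) * Matrix.trace (((Zᵀ * Z)⁻¹) ^ 2)) ∧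
    (-4 * c * ((p : ℝ) - q - 2) * Matrix.trace (((Zᵀ * Z)⁻¹) ^ 2)
        + (c ^ 2 + 4 * c) * Matrix.trace ((Zᵀ * Z)⁻¹) ^ 2 < 0) := by
  set A := (Zᵀ * Z)⁻¹ with hAdef
  have hsym : Aᵀ = A := by
    have h1 : (Zᵀ * Z)ᵀ = Zᵀ * Z := by
      rw [Matrix.transpose_mul, Matrix.transpose_transpose]
    rw [hAdef, Matrix.transpose_nonsing_inv, h1]
  have hdet : A.det ≠ 0 := by
    rw [hAdef, Matrix.det_nonsing_inv, Ring.inverse_eq_inv]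
    exact inv_ne_zero hZ.ne_zero
  have hAne : A ≠ 0 := by
    intro h
    apply hdet
    rw [h]
    have : Nonempty (Fin q) := ⟨⟨0, hq⟩⟩
    exact Matrix.det_zero
  -- set up scalar quantities
  set s : ℝ := ∑ i, ∑ j, A i j ^ 2 with hsdef
  set t : ℝ := Matrix.trace A with htdef
  have hs : Matrix.trace (A ^ 2) = s := trace_sq_symm A hsym
  obtain ⟨i0, j0, hij⟩ : ∃ i j, A i j ≠ 0 := by
    by_contra h
    push_neg at h
    exact hAne (Matrix.ext fun i j => h i j)
  have hspos : 0 < s := by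
    refine Finset.sum_pos' (fun i _ => Finset.sum_nonneg fun j _ => sq_nonneg _)
      ⟨i0, Finset.mem_univ i0, ?_⟩
    refine Finset.sum_pos' (fun j _ => sq_nonneg _) ⟨j0, Finset.mem_univ j0, ?_⟩
    positivity
  -- Cauchy–Schwarz: t² ≤ q * s
  have ht2 : t ^ 2 ≤ (q : ℝ) * s := by
    have h1 : t ^ 2 ≤ (q : ℝ) * ∑ i, A i i ^ 2 := by
      have := sq_sum_le_card_mul_sum_sq (s := (Finset.univ : Finset (Fin q)))
        (f := fun i => A i i)
      simpa [htdef, Matrix.trace, Matrix.diag, Finset.card_univ] using this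
    refine h1.trans (mul_le_mul_of_nonneg_left ?_ (Nat.cast_nonneg q))
    refine Finset.sum_le_sum fun i _ => ?_
    exact Finset.single_le_sum (fun j _ => sq_nonneg (A i j)) (Finset.mem_univ i)
  -- arithmetic setup
  have hqr : (1 : ℝ) ≤ (q : ℝ) := by exact_mod_cast hq
  have hqr0 : (0 : ℝ) < (q : ℝ) := lt_of_lt_of_le one_pos hqr
  have hp : (2 * (q : ℝ) + 3) ≤ (p : ℝ) := by exact_mod_cast hpq
  set d : ℝ := (p : ℝ) - 2 * q - 2 with hddef
  have hd : 1 ≤ d := by simp only [hddef]; linarith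
  have hcqr : c * (q : ℝ) = 2 * d := by
    rw [hc, hddef]
    field_simp
  have hcpos : 0 < c := by
    rw [hc]
    apply div_pos (by linarith) hqr0
  have hcc : 0 ≤ c ^ 2 + 4 * c := by positivity
  have hrhs : 4 * ((p : ℝ) - 2 * q - 2) ^ 2 / q = 2 * c * d := by
    rw [hc, hddef]
    field_simp
    ring
  have hpq2 : (p : ℝ) - q - 2 = d + q := by rw [hddef]; ring
  rw [hs, hrhs, hpq2]
  have key : -4 * c * (d + (q : ℝ)) * s + (c ^ 2 + 4 * c) * t ^ 2 ≤ -(2 * c * d) * s := by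
    nlinarith [mul_nonneg hcc (sub_nonneg.mpr ht2), mul_le_mul_of_nonneg_right hcqr.le hspos.le,
      mul_le_mul_of_nonneg_right hcqr.ge hspos.le]
  refine ⟨key, lt_of_le_of_lt key ?_⟩
  have : 0 < 2 * c * d * s := by positivity
  linarith
end
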